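/- arXiv:2510.21593 — 4 statements merged into one kernel-verified Lean document; each statement's English description precedes it below -/
import Mathlib

section
/- The map from the infinite dihedral group D_∞ = ⟨s,t | t² = 1, (st)² = 1⟩ to GL(2,ℤ) sending s to the matrix A = [[2,-1],[1,0]] and t to B = [[0,1],[1,0]] is an injective group homomorphism. -/
abbrev GL2 := Matrix.GeneralLinearGroup (Fin 2) ℤ

lemma one2 : (1 : Matrix (Fin 2) (Fin 2) ℤ) = !![1,0;0,1] := Matrix.one_fin_two

def aU : GL2 :=
  ⟨!![2, -1; 1, 0], !![0, 1; -1, 2],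
    by rw [one2]; norm_num [Matrix.mul_fin_two],
    by rw [one2]; norm_num [Matrix.mul_fin_two]⟩

def bU : GL2 :=
  ⟨!![0, 1; 1, 0], !![0, 1; 1, 0],
    by rw [one2]; norm_num [Matrix.mul_fin_two],
    by rw [one2]; norm_num [Matrix.mul_fin_two]⟩

def z (i : ZMod 0) : ℤ := i

lemma hba : SemiconjBy bU aU aU⁻¹ := by
  apply Units.ext
  show (bU.val * aU.val) = (aU.inv * bU.val)
  norm_num [aU, bU, Matrix.mul_fin_two]

lemma key' (i : ℤ) : bU * aU ^ i = aU ^ (-i) * bU := by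
  have := (hba.zpow_right i : SemiconjBy bU (aU ^ i) (aU⁻¹ ^ i))
  simpa [_root_.zpow_neg, _root_.inv_zpow, SemiconjBy] using this

lemma key (i : ℤ) : aU ^ i * bU = bU * aU ^ (-i) := by
  have := key' (-i)
  simp only [neg_neg] at this
  rw [this]

lemma bb : bU * bU = 1 := by
  apply Units.ext
  show (bU.val * bU.val) = 1
  rw [one2]; norm_num [bU, Matrix.mul_fin_two]

lemma apow (i : ℤ) : ((aU ^ i : GL2) : Matrix (Fin 2) (Fin 2) ℤ) = !![1 + i, -i; i, 1 - i] := by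
  induction i using Int.induction_on with
  | zero => rw [zpow_zero, Units.val_one, one2]; norm_num
  | succ k ih =>
      rw [_root_.zpow_add_one, Units.val_mul, ih]
      show _ * aU.val = _
      rw [show aU.val = !![2,-1;1,0] from rfl, Matrix.mul_fin_two]
      ring_nf
  | pred k ih =>
      rw [sub_eq_add_neg, _root_.zpow_add, Units.val_mul, ih, zpow_neg_one]
      rw [show ((aU⁻¹ : GL2) : Matrix (Fin 2) (Fin 2) ℤ) = !![0,1;-1,2] from rfl,
        Matrix.mul_fin_two]
      ring_nf

def g : DihedralGroup 0 → GL2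
  | .r i => aU ^ z i
  | .sr i => bU * aU ^ z i

lemma zadd (i j : ZMod 0) : z (i + j) = z i + z j := rfl
lemma zsub (i j : ZMod 0) : z (i - j) = z i - z j := rfl

lemma gmul (x y : DihedralGroup 0) : g (x * y) = g x * g y := by
  rcases x with i | i <;> rcases y with j | j
  · show aU ^ z (i + j) = aU ^ z i * aU ^ z j
    rw [zadd, _root_.zpow_add]
  · show bU * aU ^ z (j - i) = aU ^ z i * (bU * aU ^ z j)
    rw [← mul_assoc, key, mul_assoc, ← _root_.zpow_add, zsub]
    ring_nf
  · show bU * aU ^ z (i + j) = bU * aU ^ z i * aU ^ z j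
    rw [mul_assoc, ← _root_.zpow_add, zadd]
  · show aU ^ z (j - i) = bU * aU ^ z i * (bU * aU ^ z j)
    rw [mul_assoc, ← mul_assoc (aU ^ z i), key, ← mul_assoc, ← mul_assoc, bb,
      one_mul, ← _root_.zpow_add, zsub]
    ring_nf

def f : DihedralGroup 0 →* GL2 := MonoidHom.mk' g gmul

lemma finj : Function.Injective f := by
  rw [injective_iff_map_eq_one]
  rintro (i | i) h
  · have h' : ((aU ^ z i : GL2) : Matrix (Fin 2) (Fin 2) ℤ) = 1 := congrArg Units.val h
    rw [apow, one2] at h'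
    have hz : z i = 0 := by
      have h1 := congrFun (congrFun h' 1) 0
      have h2 := congrFun (congrFun h' 0) 1
      simp at h1 h2
      omega
    show DihedralGroup.r i = 1
    rw [DihedralGroup.one_def]
    exact congrArg DihedralGroup.r hz
  · exfalso
    have h' : ((bU * aU ^ z i : GL2) : Matrix (Fin 2) (Fin 2) ℤ) = 1 := congrArg Units.val h
    rw [Units.val_mul, apow, one2, show (bU : Matrix (Fin 2) (Fin 2) ℤ) = !![0,1;1,0] from rfl,
      Matrix.mul_fin_two] at h'
    have h1 := congrFun (congrFun h' 0) 0
    have h2 := congrFun (congrFun h' 1) 1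
    simp at h1 h2
    omega

/-- The map from the infinite dihedral group `D_∞ = ⟨s,t | t² = 1, (st)² = 1⟩`
(Mathlib's `DihedralGroup 0`, with `s = r 1` and `t = sr 0`) to `GL(2,ℤ)` sending
`s ↦ A = !![2,-1;1,0]` and `t ↦ B = !![0,1;1,0]` is an injective group homomorphism. -/
theorem stmt0 :
    ∃ f : DihedralGroup 0 →* Matrix.GeneralLinearGroup (Fin 2) ℤ,
      Function.Injective f ∧
      (f (DihedralGroup.r 1) : Matrix (Fin 2) (Fin 2) ℤ) = !![2, -1; 1, 0] ∧
      (f (DihedralGroup.sr 0) : Matrix (Fin 2) (Fin 2) ℤ) = !![0, 1; 1, 0] := by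
  refine ⟨f, finj, ?_, ?_⟩
  · show ((aU ^ z (1 : ZMod 0) : GL2) : Matrix (Fin 2) (Fin 2) ℤ) = _
    rw [apow, show z 1 = 1 from rfl]; norm_num
  · show ((bU * aU ^ z (0 : ZMod 0) : GL2) : Matrix (Fin 2) (Fin 2) ℤ) = _
    rw [Units.val_mul, apow,
      show (bU : Matrix (Fin 2) (Fin 2) ℤ) = !![0,1;1,0] from rfl, Matrix.mul_fin_two, show z 0 = 0 from rfl]
    norm_num
end

section
/- For any integer m ≥ 3, the map from the dihedral group D_{2m} of order 2m to GL(2, ℤ/mℤ) sending the rotation generator s to [A]_m = [[2,-1],[1,0]] mod m and the reflection generator t to [B]_m = [[0,1],[1,0]] mod m is an injective group homomorphism. -/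
namespace Stmt4Aux

open Matrix DihedralGroup

def Mmat (m : ℕ) : DihedralGroup m → Matrix (Fin 2) (Fin 2) (ZMod m)
  | r i => !![1 + i, -i; i, 1 - i]
  | sr i => !![i, 1 - i; 1 + i, -i]

lemma Mmat_mul (m : ℕ) (a b : DihedralGroup m) :
    Mmat m (a * b) = Mmat m a * Mmat m b := by
  cases a <;> cases b <;>
    simp [Mmat, DihedralGroup.r_mul_r, DihedralGroup.r_mul_sr,
      DihedralGroup.sr_mul_r, DihedralGroup.sr_mul_sr, Matrix.mul_fin_two] <;>
    refine ⟨⟨?_, ?_⟩, ?_, ?_⟩ <;> ring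

lemma Mmat_one (m : ℕ) : Mmat m 1 = 1 := by
  show Mmat m (r 0) = 1
  simp [Mmat]
  ext i j <;> fin_cases i <;> fin_cases j <;> simp [Matrix.one_fin_two]

def Munit (m : ℕ) (g : DihedralGroup m) : Matrix.GeneralLinearGroup (Fin 2) (ZMod m) :=
  ⟨Mmat m g, Mmat m g⁻¹, by rw [← Mmat_mul, mul_inv_cancel, Mmat_one],
    by rw [← Mmat_mul, inv_mul_cancel, Mmat_one]⟩

def Mhom (m : ℕ) : DihedralGroup m →* Matrix.GeneralLinearGroup (Fin 2) (ZMod m) :=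
  MonoidHom.mk' (Munit m) (fun a b => Units.ext (Mmat_mul m a b))

end Stmt4Aux

/-- For any integer `m ≥ 3`, the map from the dihedral group `D_{2m}` of order `2m`
(Mathlib's `DihedralGroup m`, with rotation generator `s = r 1` and reflection
generator `t = sr 0`) to `GL(2, ℤ/mℤ)` sending `s ↦ !![2,-1;1,0] mod m` and
`t ↦ !![0,1;1,0] mod m` is an injective group homomorphism. -/
theorem stmt4 (m : ℕ) (hm : 3 ≤ m) :
    ∃ f : DihedralGroup m →* Matrix.GeneralLinearGroup (Fin 2) (ZMod m),
      Function.Injective f ∧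
      (f (DihedralGroup.r 1) : Matrix (Fin 2) (Fin 2) (ZMod m)) = !![2, -1; 1, 0] ∧
      (f (DihedralGroup.sr 0) : Matrix (Fin 2) (Fin 2) (ZMod m)) = !![0, 1; 1, 0] := by
  have : NeZero m := ⟨by omega⟩
  refine ⟨Stmt4Aux.Mhom m, ?_, ?_, ?_⟩
  · rw [injective_iff_map_eq_one]
    intro g hg
    have hmat : Stmt4Aux.Mmat m g = 1 := congrArg Units.val hg
    cases g with
    | r i =>
      have h10 : (Stmt4Aux.Mmat m (DihedralGroup.r i)) 1 0 = (1 : Matrix (Fin 2) (Fin 2) (ZMod m)) 1 0 := by rw [hmat]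
      simp [Stmt4Aux.Mmat, Matrix.one_fin_two] at h10
      rw [h10]
      rfl
    | sr i =>
      exfalso
      have h00 : (Stmt4Aux.Mmat m (DihedralGroup.sr i)) 0 0 = (1 : Matrix (Fin 2) (Fin 2) (ZMod m)) 0 0 := by rw [hmat]
      have h11 : (Stmt4Aux.Mmat m (DihedralGroup.sr i)) 1 1 = (1 : Matrix (Fin 2) (Fin 2) (ZMod m)) 1 1 := by rw [hmat]
      simp [Stmt4Aux.Mmat, Matrix.one_fin_two] at h00 h11
      have h2 : (2 : ZMod m) = 0 := by
        have := h11
        rw [h00] at this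
        linear_combination -this
      have h2' : ((2 : ℕ) : ZMod m) = 0 := by exact_mod_cast h2
      rw [ZMod.natCast_eq_zero_iff] at h2'
      exact absurd (Nat.le_of_dvd (by norm_num) h2') (by omega)
  · show Stmt4Aux.Mmat m (DihedralGroup.r 1) = _
    simp [Stmt4Aux.Mmat]
    norm_num
  · show Stmt4Aux.Mmat m (DihedralGroup.sr 0) = _
    simp [Stmt4Aux.Mmat]
end

section
/- Let G = ℤ * (ℤ/2ℤ) with generators σ and τ as above, and let m ≥ 3. The normal closure in G of {σ^m} has infinite index in G, whereas the normal closure of {στστ, σ^m} has index 2m. In particular the two normal closures are distinct. -/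
open Monoid DihedralGroup Multiplicative

/-- Hom from `Multiplicative (ZMod n)` sending the generator to `x` with `x ^ n = 1`. -/
def powZMod (n : ℕ) [NeZero n] {H : Type*} [Monoid H] (x : H) (hx : x ^ n = 1) :
    Multiplicative (ZMod n) →* H where
  toFun a := x ^ (Multiplicative.toAdd a).val
  map_one' := by simp
  map_mul' a b := by
    show x ^ (Multiplicative.toAdd a + Multiplicative.toAdd b).val = _
    rw [ZMod.val_add, ← pow_eq_pow_mod _ hx, pow_add]

theorem powZMod_apply (n : ℕ) [NeZero n] {H : Type*} [Monoid H] (x : H) (hx : x ^ n = 1)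
    (a : ZMod n) : powZMod n x hx (Multiplicative.ofAdd a) = x ^ a.val := rfl

/-- The generator `σ` of the `ℤ` factor of `ℤ * (ℤ/2ℤ)`. -/
def vsigma : Monoid.Coprod (Multiplicative ℤ) (Multiplicative (ZMod 2)) :=
  Monoid.Coprod.inl (Multiplicative.ofAdd (1 : ℤ))

/-- The generator `τ` of the `ℤ/2ℤ` factor of `ℤ * (ℤ/2ℤ)`. -/
def vtau : Monoid.Coprod (Multiplicative ℤ) (Multiplicative (ZMod 2)) :=
  Monoid.Coprod.inr (Multiplicative.ofAdd (1 : ZMod 2))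

theorem vtau_sq : vtau * vtau = 1 := by
  rw [vtau, ← map_mul, ← ofAdd_add]
  have : (1 + 1 : ZMod 2) = 0 := by decide
  rw [this, ofAdd_zero, map_one]

/-- The homomorphism `G → D_m`, `σ ↦ r 1`, `τ ↦ sr 0`. -/
def phiD (m : ℕ) :
    Monoid.Coprod (Multiplicative ℤ) (Multiplicative (ZMod 2)) →* DihedralGroup m :=
  Monoid.Coprod.lift (zpowersHom _ (DihedralGroup.r 1))
    (powZMod 2 (DihedralGroup.sr 0) (by rw [pow_two]; exact DihedralGroup.sr_mul_self 0))

theorem phiD_sigma (m : ℕ) : phiD m vsigma = DihedralGroup.r 1 := by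
  rw [vsigma, phiD, Monoid.Coprod.lift_apply_inl]
  simp

theorem phiD_tau (m : ℕ) : phiD m vtau = DihedralGroup.sr 0 := by
  rw [vtau, phiD, Monoid.Coprod.lift_apply_inr, powZMod_apply]
  have : (1 : ZMod 2).val = 1 := rfl
  rw [this, pow_one]

/-- The underlying function of the hom `D_m → Q`. -/
def psiFun {Q : Type*} [Group Q] (m : ℕ) (t : Q) (χ : Multiplicative (ZMod m) →* Q) :
    DihedralGroup m → Q
  | .r a => χ (Multiplicative.ofAdd a)
  | .sr a => t * χ (Multiplicative.ofAdd a)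

theorem psiFun_mul {Q : Type*} [Group Q] (m : ℕ) (t : Q) (χ : Multiplicative (ZMod m) →* Q)
    (ht : t * t = 1) (hc : ∀ x, t * χ x * t = (χ x)⁻¹) :
    ∀ x y, psiFun m t χ (x * y) = psiFun m t χ x * psiFun m t χ y := by
  have hinv : ∀ a : ZMod m, χ (ofAdd (-a)) = (χ (ofAdd a))⁻¹ := fun a => by
    rw [← map_inv, ← ofAdd_neg]
  have hχ : ∀ a b : ZMod m, χ (ofAdd a) * χ (ofAdd b) = χ (ofAdd (a + b)) := fun a b => by
    rw [← map_mul, ← ofAdd_add]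
  have hct : ∀ a : ZMod m, χ (ofAdd a) * t = t * χ (ofAdd (-a)) := fun a => by
    rw [hinv, ← hc, ← mul_assoc, ← mul_assoc, ht, one_mul]
  intro x y
  cases x with
  | r a =>
    cases y with
    | r b => rw [DihedralGroup.r_mul_r]; show χ _ = χ _ * χ _; rw [hχ]
    | sr b =>
      rw [DihedralGroup.r_mul_sr]
      show t * χ (ofAdd (b - a)) = χ (ofAdd a) * (t * χ (ofAdd b))
      symm
      rw [← mul_assoc, hct, mul_assoc, hχ, neg_add_eq_sub]
  | sr a =>
    cases y with
    | r b =>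
      rw [DihedralGroup.sr_mul_r]
      show t * χ (ofAdd (a + b)) = t * χ (ofAdd a) * χ (ofAdd b)
      rw [mul_assoc, hχ]
    | sr b =>
      rw [DihedralGroup.sr_mul_sr]
      show χ (ofAdd (b - a)) = t * χ (ofAdd a) * (t * χ (ofAdd b))
      symm
      rw [← mul_assoc, hc, ← hinv, hχ, neg_add_eq_sub]

theorem ker_phiD (m : ℕ) (hm : 3 ≤ m) :
    (phiD m).ker = Subgroup.normalClosure {vsigma * vtau * vsigma * vtau, vsigma ^ m} := by
  haveI : NeZero m := ⟨by omega⟩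
  set N := Subgroup.normalClosure {vsigma * vtau * vsigma * vtau, vsigma ^ m} with hN
  apply le_antisymm
  · -- ker ≤ N via the hom ψ : D_m → G⧸N
    set Q := _ ⧸ N
    set mk : _ →* Q := QuotientGroup.mk' N with hmk
    set s : Q := mk vsigma with hs
    set t : Q := mk vtau with htdef
    have hsm : s ^ m = 1 := by
      rw [hs, ← map_pow]
      exact (QuotientGroup.eq_one_iff _).mpr
        (Subgroup.subset_normalClosure (by simp))
    have ht : t * t = 1 := by
      rw [htdef, ← map_mul, vtau_sq, map_one]
    have htinv : t⁻¹ = t := inv_eq_of_mul_eq_one_right ht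
    have hstst : s * t * s * t = 1 := by
      rw [hs, htdef, ← map_mul, ← map_mul, ← map_mul]
      exact (QuotientGroup.eq_one_iff _).mpr
        (Subgroup.subset_normalClosure (by simp))
    have htst : t * s * t = s⁻¹ := by
      rw [eq_inv_iff_mul_eq_one]
      have h2 : t * s * t * s = s⁻¹ * (s * t * s * t) * s := by group
      rw [h2, hstst, mul_one, inv_mul_cancel]
    set χ : Multiplicative (ZMod m) →* Q := powZMod m s hsm with hχdef
    have hc : ∀ x, t * χ x * t = (χ x)⁻¹ := by
      intro x
      show t * s ^ (Multiplicative.toAdd x).val * t = (s ^ (Multiplicative.toAdd x).val)⁻¹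
      have hconj : ∀ u : Q, t * u * t = MulAut.conj t u := fun u => by
        rw [MulAut.conj_apply, htinv]
      rw [hconj, map_pow, ← hconj, htst, inv_pow]
    set ψ : DihedralGroup m →* Q := MonoidHom.mk' (psiFun m t χ) (psiFun_mul m t χ ht hc)
      with hψ
    have hcomp : ψ.comp (phiD m) = mk := by
      apply Monoid.Coprod.hom_ext
      · apply MonoidHom.ext_mint
        show ψ (phiD m vsigma) = mk vsigma
        rw [phiD_sigma]
        show χ (ofAdd 1) = s
        rw [powZMod_apply, ZMod.val_one_eq_one_mod]
        rw [Nat.mod_eq_of_lt (by omega), pow_one]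
      · ext x
        show ψ (phiD m (Monoid.Coprod.inr x)) = mk (Monoid.Coprod.inr x)
        have : ∀ a : ZMod 2, a = 0 ∨ a = 1 := by decide
        rcases this (Multiplicative.toAdd x) with h | h
        · have hx : x = 0 := h
          subst hx
          show ψ (phiD m (Monoid.Coprod.inr 1)) = mk (Monoid.Coprod.inr 1)
          rw [map_one, map_one, map_one, map_one]
        · have hx : x = 1 := h
          subst hx
          show ψ (phiD m vtau) = mk vtau
          rw [phiD_tau]
          show t * χ (ofAdd 0) = t
          rw [powZMod_apply, ZMod.val_zero, pow_zero, mul_one]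
    intro g hg
    have : mk g = 1 := by
      rw [← hcomp]
      show ψ (phiD m g) = 1
      rw [hg, map_one]
    exact (QuotientGroup.eq_one_iff g).mp this
  · -- N ≤ ker
    apply Subgroup.normalClosure_le_normal
    intro x hx
    simp only [Set.mem_insert_iff, Set.mem_singleton_iff] at hx
    rcases hx with h | h
    · subst h
      show phiD m _ = 1
      rw [map_mul, map_mul, map_mul, phiD_sigma, phiD_tau, DihedralGroup.r_mul_sr,
        DihedralGroup.sr_mul_r, DihedralGroup.sr_mul_sr, DihedralGroup.one_def]
      norm_num
    · subst h
      show phiD m _ = 1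
      rw [map_pow, phiD_sigma, DihedralGroup.r_one_pow, ZMod.natCast_self,
        ← DihedralGroup.one_def]

theorem phiD_surj (m : ℕ) [NeZero m] : Function.Surjective (phiD m) := by
  intro x
  have hcast : ∀ a : ZMod m, ((a.val : ZMod m)) = a := fun a => ZMod.natCast_rightInverse a
  cases x with
  | r a =>
    refine ⟨vsigma ^ a.val, ?_⟩
    rw [map_pow, phiD_sigma, DihedralGroup.r_one_pow, hcast]
  | sr a =>
    refine ⟨vtau * vsigma ^ a.val, ?_⟩
    rw [map_mul, map_pow, phiD_tau, phiD_sigma, DihedralGroup.r_one_pow,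
      DihedralGroup.sr_mul_r, zero_add, hcast]

theorem part2 (m : ℕ) (hm : 3 ≤ m) :
    (Subgroup.normalClosure {vsigma * vtau * vsigma * vtau, vsigma ^ m}).index = 2 * m := by
  haveI : NeZero m := ⟨by omega⟩
  rw [← ker_phiD m hm]
  show Nat.card (_ ⧸ (phiD m).ker) = 2 * m
  rw [Nat.card_congr (QuotientGroup.quotientKerEquivOfSurjective (phiD m)
    (phiD_surj m)).toEquiv]
  exact DihedralGroup.nat_card

theorem part1 (m : ℕ) (hm : 3 ≤ m) :
    ¬ (Subgroup.normalClosure {vsigma ^ m}).FiniteIndex := by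
  set ζ : ℂ := Complex.exp (2 * Real.pi * Complex.I / m) with hζdef
  have hprim : IsPrimitiveRoot ζ m := Complex.isPrimitiveRoot_exp m (by omega)
  have hζm : ζ ^ m = 1 := hprim.pow_eq_one
  have hζ1 : ζ ≠ 1 := by
    intro h
    have h1 := hprim.dvd_of_pow_eq_one 1 (by rw [pow_one, h])
    have := Nat.le_of_dvd one_pos h1
    omega
  have hζ0 : ζ ≠ 0 := Complex.exp_ne_zero _
  set ζu : ℂˣ := Units.mk0 ζ hζ0 with hζu
  set A : Equiv.Perm ℂ := MulAction.toPermHom ℂˣ ℂ ζu with hA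
  set B : Equiv.Perm ℂ := Function.Involutive.toPerm (fun z : ℂ => 1 - z) (fun z => by ring) with hB'
  have hBz : ∀ z : ℂ, B z = 1 - z := fun z => rfl
  have hAz : ∀ z : ℂ, A z = ζ * z := fun z => rfl
  have hAiz : ∀ z : ℂ, A⁻¹ z = ζ⁻¹ * z := fun z => rfl
  have hB : B ^ 2 = 1 := by
    ext z
    rw [pow_two]
    show B (B z) = z
    rw [hBz, hBz]; ring
  set f := Monoid.Coprod.lift (zpowersHom (Equiv.Perm ℂ) A) (powZMod 2 B hB) with hf
  have hfs : f vsigma = A := by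
    rw [vsigma, hf, Monoid.Coprod.lift_apply_inl]; simp
  have hft : f vtau = B := by
    rw [vtau, hf, Monoid.Coprod.lift_apply_inr, powZMod_apply]
    have : (1 : ZMod 2).val = 1 := rfl
    rw [this, pow_one]
  have hker : Subgroup.normalClosure {vsigma ^ m} ≤ f.ker := by
    apply Subgroup.normalClosure_le_normal
    intro x hx
    simp only [Set.mem_singleton_iff] at hx
    subst hx
    show f _ = 1
    rw [map_pow, hfs, hA]
    have hu : ζu ^ m = 1 := by
      ext
      push_cast
      exact hζm
    rw [← map_pow, hu, map_one]
  set T : Equiv.Perm ℂ := f (vsigma * vtau * vsigma⁻¹ * vtau) with hT'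
  have hT : ∀ z : ℂ, T z = z + (ζ - 1) := by
    intro z
    rw [hT', map_mul, map_mul, map_mul, map_inv, hfs, hft]
    show A (B (A⁻¹ (B z))) = z + (ζ - 1)
    rw [hBz, hAiz, hBz, hAz]
    field_simp
    ring
  have hTpow : ∀ j : ℕ, (T ^ j) 0 = j * (ζ - 1) := by
    intro j
    induction j with
    | zero => simp
    | succ n ih =>
      rw [pow_succ']
      show T ((T ^ n) 0) = _
      rw [hT, ih]
      push_cast
      ring
  intro hfin
  haveI := hfin
  haveI : (f.ker).FiniteIndex := Subgroup.finiteIndex_of_le hker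
  have h0 : f.ker.index ≠ 0 := Subgroup.FiniteIndex.index_ne_zero
  apply h0
  have hmem : ∀ j : ℕ, T ^ j ∈ f.range := fun j =>
    ⟨(vsigma * vtau * vsigma⁻¹ * vtau) ^ j, by rw [map_pow, hT']⟩
  haveI hinf : Infinite f.range := by
    refine Infinite.of_injective (fun j : ℕ => (⟨T ^ j, hmem j⟩ : f.range)) ?_
    intro i j hij
    have hij' : T ^ i = T ^ j := congrArg Subtype.val hij
    have h1 : (T ^ i) 0 = (T ^ j) 0 := by rw [hij']
    rw [hTpow, hTpow] at h1
    have hz : (ζ - 1) ≠ 0 := sub_ne_zero.mpr hζ1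
    have h2 : (i : ℂ) = j := mul_right_cancel₀ hz h1
    exact_mod_cast h2
  calc f.ker.index = Nat.card (_ ⧸ f.ker) := rfl
    _ = Nat.card f.range := Nat.card_congr (QuotientGroup.quotientKerEquivRange f).toEquiv
    _ = 0 := Nat.card_eq_zero_of_infinite

/-- In `G = ℤ * (ℤ/2ℤ)` with generators `σ`, `τ`, for `m ≥ 3` the normal closure of
`{σ^m}` has infinite index, whereas the normal closure of `{στστ, σ^m}` has index `2m`;
in particular the two normal closures are distinct. -/
theorem stmt9 (m : ℕ) (hm : 3 ≤ m) :
    ¬ (Subgroup.normalClosure {vsigma ^ m}).FiniteIndex ∧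
    (Subgroup.normalClosure {vsigma * vtau * vsigma * vtau, vsigma ^ m}).index = 2 * m ∧
    Subgroup.normalClosure {vsigma ^ m}
      ≠ Subgroup.normalClosure {vsigma * vtau * vsigma * vtau, vsigma ^ m} := by
  refine ⟨part1 m hm, part2 m hm, ?_⟩
  intro heq
  apply part1 m hm
  constructor
  rw [heq, part2 m hm]
  omega
end

section
/- Define M_i, N_i ∈ GL_n(ℤ) by: M_i acts as [[2,-1],[1,0]] on coordinates i,i+1 and as the identity elsewhere, and N_i acts as [[0,1],[1,0]] on coordinates i,i+1 and identity elsewhere. Then N_i M_{i+1} M_i = M_{i+1} M_i N_{i+1} for all valid i, i.e., the virtual integral Burau representation respects the welded (forbidden) relation. -/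
def burauMinusMat (n : ℕ) (i : Fin n) : Matrix (Fin (n + 1)) (Fin (n + 1)) ℤ :=
  fun j k =>
    if j = i.castSucc ∧ k = i.castSucc then 2
    else if j = i.castSucc ∧ k = i.succ then -1
    else if j = i.succ ∧ k = i.castSucc then 1
    else if j = i.succ ∧ k = i.succ then 0
    else if j = k then 1 else 0

def virtTauMat (n : ℕ) (i : Fin n) : Matrix (Fin (n + 1)) (Fin (n + 1)) ℤ :=
  fun j k =>
    if j = i.castSucc ∧ k = i.castSucc then 0
    else if j = i.castSucc ∧ k = i.succ then 1
    else if j = i.succ ∧ k = i.castSucc then 1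
    else if j = i.succ ∧ k = i.succ then 0
    else if j = k then 1 else 0

open Matrix in
lemma burau_eq (n : ℕ) (i : Fin n) :
    burauMinusMat n i = 1 + single i.castSucc i.castSucc 1
      - single i.castSucc i.succ 1 + single i.succ i.castSucc 1
      - single i.succ i.succ 1 := by
  ext r k
  simp only [burauMinusMat, Matrix.add_apply, Matrix.sub_apply, Matrix.one_apply,
    Matrix.single, Matrix.of_apply]
  split_ifs <;>
    (simp only [Fin.ext_iff, Fin.coe_castSucc, Fin.val_succ, not_and] at * <;> omega)

open Matrix in
lemma tau_eq (n : ℕ) (i : Fin n) :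
    virtTauMat n i = 1 - single i.castSucc i.castSucc 1
      + single i.castSucc i.succ 1 + single i.succ i.castSucc 1
      - single i.succ i.succ 1 := by
  ext r k
  simp only [virtTauMat, Matrix.add_apply, Matrix.sub_apply, Matrix.one_apply,
    Matrix.single, Matrix.of_apply]
  split_ifs <;>
    (simp only [Fin.ext_iff, Fin.coe_castSucc, Fin.val_succ, not_and] at * <;> omega)

open Matrix in
lemma key_s15 {m : ℕ} (a b c : Fin m) (hab : a ≠ b) (hbc : b ≠ c) (hac : a ≠ c) :
    (1 - single a a (1:ℤ) + single a b 1 + single b a 1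
        - single b b 1)
      * (1 + single b b 1 - single b c 1 + single c b 1
        - single c c 1)
      * (1 + single a a 1 - single a b 1 + single b a 1
        - single b b 1)
    = (1 + single b b 1 - single b c 1 + single c b 1
        - single c c 1)
      * (1 + single a a 1 - single a b 1 + single b a 1
        - single b b 1)
      * (1 - single b b 1 + single b c 1 + single c b 1
        - single c c 1) := by
  simp only [Matrix.mul_add, Matrix.add_mul, Matrix.mul_sub, Matrix.sub_mul,
    Matrix.one_mul, Matrix.mul_one,
    Matrix.single_mul_single_same, Matrix.single_mul_single_of_ne,
    hab, hbc, hac, hab.symm, hbc.symm, hac.symm, ne_eq, not_false_iff,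
    mul_one, sub_zero, zero_sub, add_zero, zero_add, Matrix.zero_mul, Matrix.mul_zero]
  abel

/-- With `M_i = ρ_v(σ_i)` the integral Burau matrix and `N_i = ρ_v(τ_i)` the transposition
matrix, we have `N_i M_{i+1} M_i = M_{i+1} M_i N_{i+1}`: the virtual integral Burau
representation respects the welded (forbidden) relation. -/
theorem stmt15 (n : ℕ) (i j : Fin n) (h : (j : ℕ) = (i : ℕ) + 1) :
    virtTauMat n i * burauMinusMat n j * burauMinusMat n i
      = burauMinusMat n j * burauMinusMat n i * virtTauMat n j := by
  have hcs : j.castSucc = i.succ := by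
    apply Fin.ext; simp [h]
  rw [burau_eq, burau_eq, tau_eq, tau_eq, hcs]
  exact key_s15 i.castSucc i.succ j.succ (Fin.castSucc_lt_succ (i := i)).ne
    (by simp [Fin.ext_iff, h]) (by simp [Fin.ext_iff, h]; omega)
end
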